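/- Define H_k(x_0,...,x_k) = ∑_{i=0}^k H(x_i)/∏_{j≠i}(A(x_i) - A(x_j)) where A(x) = (x/(1+x))e^{-z x} and H(z;x) is a power series in z with polynomial coefficients in x over a field K of characteristic 0. Then H_k(x_0,...,x_k), a priori a power series in z with rational-function coefficients, in fact has coefficients in K[x_0, ..., x_k]; and if additionally H(-1) = 0, then every coefficient of H_k is divisible by (1+x_0)(1+x_1)···(1+x_k). -/

import Mathlib

/-- The formal power series `exp(c·z)` in `z`, with coefficients `c^n/n!`. -/
noncomputable def expF {F : Type*} [Field F] (c : F) : PowerSeries F :=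
  PowerSeries.mk fun n => (n.factorial : F)⁻¹ * c ^ n

/-- The series `A(x) = (x/(1+x))·e^{-zx}`. -/
noncomputable def AofF {F : Type*} [Field F] (x : F) : PowerSeries F :=
  PowerSeries.C (x / (1 + x)) * expF (-x)

open MvPolynomial Finset

namespace Aux18

set_option linter.unusedSectionVars false
set_option linter.unnecessarySimpa false

theorem prod_primes_dvd' {A : Type*} [CommRing A] [IsDomain A] {ι : Type*} [DecidableEq ι]
    (s : Finset ι) (g : ι → A) (hp : ∀ e ∈ s, Prime (g e))
    (hnd : ∀ e ∈ s, ∀ f ∈ s, e ≠ f → ¬ g e ∣ g f)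
    {N : A} (hd : ∀ e ∈ s, g e ∣ N) : (∏ e ∈ s, g e) ∣ N := by
  induction s using Finset.induction_on with
  | empty => simpa using one_dvd N
  | @insert a s ha ih =>
    have hPs : (∏ e ∈ s, g e) ∣ N := by
      refine ih (fun e he => hp e (mem_insert_of_mem he))
        (fun e he f hf hef => hnd e (mem_insert_of_mem he) f (mem_insert_of_mem hf) hef)
        (fun e he => hd e (mem_insert_of_mem he))
    obtain ⟨M, hM⟩ := hPs
    have hga : Prime (g a) := hp a (mem_insert_self a s)
    have hgaN : g a ∣ N := hd a (mem_insert_self a s)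
    have hnot : ¬ g a ∣ ∏ e ∈ s, g e := by
      intro hdd
      obtain ⟨e, he, hee⟩ := hga.exists_mem_finset_dvd hdd
      exact hnd a (mem_insert_self a s) e (mem_insert_of_mem he)
        (fun h => ha (h ▸ he)) hee
    have : g a ∣ M := by
      rcases hga.dvd_mul.mp (hM ▸ hgaN) with h | h
      · exact absurd h hnot
      · exact h
    obtain ⟨M', hM'⟩ := this
    rw [Finset.prod_insert ha]
    exact ⟨M', by rw [hM, hM', mul_assoc, mul_left_comm]⟩

theorem prime_X_sub_X {σ : Type*} [DecidableEq σ] {A : Type*} [CommRing A] [IsDomain A]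
    {i j : σ} (h : i ≠ j) : Prime (MvPolynomial.X i - MvPolynomial.X j : MvPolynomial σ A) := by
  classical
  let e1 : MvPolynomial σ A ≃ₐ[A] MvPolynomial (Option {b : σ // b ≠ i}) A :=
    MvPolynomial.renameEquiv A (Equiv.optionSubtypeNe i).symm
  let e2 : MvPolynomial (Option {b : σ // b ≠ i}) A ≃ₐ[A] Polynomial (MvPolynomial {b : σ // b ≠ i} A) :=
    MvPolynomial.optionEquivLeft A {b : σ // b ≠ i}
  have := (MulEquiv.prime_iff (e1.toRingEquiv.trans e2.toRingEquiv).toMulEquiv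
      (p := (MvPolynomial.X i - MvPolynomial.X j : MvPolynomial σ A)))
  rw [← this]
  have h1 : (e1.toRingEquiv.trans e2.toRingEquiv).toMulEquiv (X i - X j) =
      Polynomial.X - Polynomial.C (X ⟨j, Ne.symm h⟩) := by
    show e2 (e1 (X i - X j)) = _
    have : e1 (X i - X j) = X none - X (some ⟨j, Ne.symm h⟩) := by
      simp only [e1, map_sub, renameEquiv_apply, rename_X,
        Equiv.optionSubtypeNe_symm_self, Equiv.optionSubtypeNe_symm_of_ne (Ne.symm h)]
    rw [this, map_sub, optionEquivLeft_X_none, optionEquivLeft_X_some]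
  rw [h1]
  exact Polynomial.prime_X_sub_C _

theorem sub_dvd_sub_subst {σ : Type*} [DecidableEq σ] {A : Type*} [CommRing A]
    (i j : σ) (p : MvPolynomial σ A) :
    (X j - X i : MvPolynomial σ A) ∣
      p - aeval (fun t => if t = j then (X i : MvPolynomial σ A) else X t) p := by
  induction p using MvPolynomial.induction_on with
  | C a => simp [aeval_C, algebraMap_eq]
  | add p q hp hq =>
    have : p + q - aeval (fun t => if t = j then (X i : MvPolynomial σ A) else X t) (p + q)
        = (p - aeval (fun t => if t = j then (X i : MvPolynomial σ A) else X t) p)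
          + (q - aeval (fun t => if t = j then (X i : MvPolynomial σ A) else X t) q) := by
      rw [map_add]; ring
    rw [this]; exact dvd_add hp hq
  | mul_X p t hp =>
    rw [map_mul, aeval_X]
    have : p * X t - aeval (fun t => if t = j then (X i : MvPolynomial σ A) else X t) p
          * (if t = j then (X i : MvPolynomial σ A) else X t)
        = (p - aeval (fun t => if t = j then (X i : MvPolynomial σ A) else X t) p) * X t
          + aeval (fun t => if t = j then (X i : MvPolynomial σ A) else X t) p
            * (X t - if t = j then (X i : MvPolynomial σ A) else X t) := by ring
    rw [this]
    refine dvd_add (hp.mul_right _) (Dvd.dvd.mul_left ?_ _)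
    by_cases h : t = j
    · subst h; simp
    · simp [h]

theorem rename_swap_vandermonde {n : ℕ} {A : Type*} [CommRing A] {a b : Fin n} (hab : a ≠ b) :
    rename (Equiv.swap a b) (∏ i, ∏ j ∈ Ioi i, (X j - X i : MvPolynomial (Fin n) A))
      = -∏ i, ∏ j ∈ Ioi i, (X j - X i : MvPolynomial (Fin n) A) := by
  rw [← Matrix.det_vandermonde (fun i => (X i : MvPolynomial (Fin n) A))]
  rw [AlgHom.map_det (rename (Equiv.swap a b))]
  have h1 : (rename (R := A) (Equiv.swap a b)).mapMatrix
        (Matrix.vandermonde fun i => (X i : MvPolynomial (Fin n) A))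
      = fun i => (Matrix.vandermonde fun i => (X i : MvPolynomial (Fin n) A)) (Equiv.swap a b i) := by
    funext i j
    simp [Matrix.vandermonde, AlgHom.mapMatrix_apply, Matrix.map_apply]
  have h2 : (fun i => (Matrix.vandermonde fun i => (X i : MvPolynomial (Fin n) A)) (Equiv.swap a b i))
      = (Matrix.vandermonde fun i => (X i : MvPolynomial (Fin n) A)).submatrix (Equiv.swap a b) id := by
    funext i j; rfl
  rw [h1, h2, Matrix.det_permute]
  rw [Equiv.Perm.sign_swap hab, Matrix.det_vandermonde]
  push_cast
  ring

theorem prod_erase_perm {β : Type*} [CommMonoid β] {n : ℕ} (σ : Equiv.Perm (Fin n)) (i : Fin n)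
    (f : Fin n → β) :
    ∏ j ∈ Finset.univ.erase i, f (σ j) = ∏ j ∈ Finset.univ.erase (σ i), f j := by
  refine Finset.prod_nbij' (fun j => σ j) (fun j => σ.symm j) ?_ ?_ ?_ ?_ ?_ <;>
    simp +contextual [Finset.mem_erase, Equiv.apply_eq_iff_eq, Equiv.symm_apply_eq, eq_comm]
  intro a ha
  intro h
  exact ha (by rw [h, Equiv.apply_symm_apply])

set_option maxHeartbeats 1000000 in
theorem core {K : Type*} [Field K] [CharZero K] {k : ℕ}
    (t : Fin (k+1) → MvPolynomial (Fin (k+1)) K)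
    (ht : ∀ a b : Fin (k+1), a ≠ b → ∀ i,
      rename (Equiv.swap a b) (t i) = t (Equiv.swap a b i)) :
    ∃ p : MvPolynomial (Fin (k+1)) K,
      ∑ i, algebraMap (MvPolynomial (Fin (k+1)) K)
            (FractionRing (MvPolynomial (Fin (k+1)) K)) (t i)
          * (algebraMap (MvPolynomial (Fin (k+1)) K)
            (FractionRing (MvPolynomial (Fin (k+1)) K))
            (∏ j ∈ Finset.univ.erase i, (X i - X j)))⁻¹
        = algebraMap (MvPolynomial (Fin (k+1)) K)
            (FractionRing (MvPolynomial (Fin (k+1)) K)) p := by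
  classical
  set alg := algebraMap (MvPolynomial (Fin (k+1)) K)
      (FractionRing (MvPolynomial (Fin (k+1)) K)) with halg
  have hinj : Function.Injective alg :=
    IsFractionRing.injective (MvPolynomial (Fin (k+1)) K)
      (FractionRing (MvPolynomial (Fin (k+1)) K))
  set g : (Σ _ : Fin (k+1), Fin (k+1)) → MvPolynomial (Fin (k+1)) K :=
    fun e => X e.2 - X e.1 with hg
  set Pset : Finset (Σ _ : Fin (k+1), Fin (k+1)) := Finset.univ.sigma fun i => Ioi i with hPset
  set Δ : MvPolynomial (Fin (k+1)) K := ∏ i, ∏ j ∈ Ioi i, (X j - X i) with hΔ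
  have hΔprod : Δ = ∏ e ∈ Pset, g e := by
    rw [hΔ, hPset, Finset.prod_sigma]
  have hXne : ∀ {i j : Fin (k+1)}, i ≠ j → (X i - X j : MvPolynomial (Fin (k+1)) K) ≠ 0 :=
    fun h => sub_ne_zero_of_ne (fun hX => h (MvPolynomial.X_injective hX))
  set P : Fin (k+1) → MvPolynomial (Fin (k+1)) K :=
    fun i => ∏ j ∈ Finset.univ.erase i, (X i - X j) with hP
  have hPne : ∀ i, P i ≠ 0 := by
    intro i
    refine Finset.prod_ne_zero_iff.mpr ?_
    intro j hj
    exact hXne (fun h => (Finset.mem_erase.mp hj).1 h.symm)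
  -- Step A : P i ∣ Δ
  have hPdvd : ∀ i, P i ∣ Δ := by
    intro i
    set m : Fin (k+1) → (Σ _ : Fin (k+1), Fin (k+1)) :=
      fun j => if i < j then ⟨i, j⟩ else ⟨j, i⟩ with hm
    have hfac : ∀ j ∈ Finset.univ.erase i, (X i - X j : MvPolynomial (Fin (k+1)) K)
        = (if i < j then (-1 : MvPolynomial (Fin (k+1)) K) else 1) * g (m j) := by
      intro j hj
      by_cases h : i < j
      · simp only [hm, hg, h, if_true]
        ring
      · simp only [hm, hg, h, if_false, one_mul]
    have hPsplit : P i
        = (∏ j ∈ Finset.univ.erase i, (if i < j then (-1:MvPolynomial (Fin (k+1)) K) else 1))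
          * ∏ j ∈ Finset.univ.erase i, g (m j) := by
      rw [hP, ← Finset.prod_mul_distrib]
      exact Finset.prod_congr rfl hfac
    set ε := ∏ j ∈ Finset.univ.erase i,
      (if i < j then (-1:MvPolynomial (Fin (k+1)) K) else 1) with hε
    have hεε : ε * ε = 1 := by
      rw [hε, ← Finset.prod_mul_distrib]
      refine Finset.prod_eq_one ?_
      intro j _
      by_cases h : i < j <;> simp [h]
    have hminj : ∀ a ∈ Finset.univ.erase i, ∀ b ∈ Finset.univ.erase i, m a = m b → a = b := by
      intro a ha b hb hab
      have hai : a ≠ i := (Finset.mem_erase.mp ha).1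
      have hbi : b ≠ i := (Finset.mem_erase.mp hb).1
      by_cases h1 : i < a <;> by_cases h2 : i < b <;>
        simp only [hm, h1, h2, if_true, if_false, Sigma.ext_iff, heq_eq_eq] at hab
      · exact hab.2
      · exact absurd hab.2 hai
      · exact absurd hab.1 hai
      · exact hab.1
    have himg : ∏ j ∈ Finset.univ.erase i, g (m j)
        = ∏ e ∈ (Finset.univ.erase i).image m, g e :=
      (Finset.prod_image hminj).symm
    have hsub : (Finset.univ.erase i).image m ⊆ Pset := by
      intro e he
      obtain ⟨j, hj, rfl⟩ := Finset.mem_image.mp he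
      have hji : j ≠ i := (Finset.mem_erase.mp hj).1
      by_cases h : i < j
      · simp [hm, h, hPset, Finset.mem_sigma, Finset.mem_Ioi]
      · have hlt : j < i := lt_of_le_of_ne (not_lt.mp h) hji
        simp [hm, h, hPset, Finset.mem_sigma, Finset.mem_Ioi, hlt]
    obtain ⟨c, hc⟩ : (∏ e ∈ (Finset.univ.erase i).image m, g e) ∣ Δ := by
      rw [hΔprod]
      exact Finset.prod_dvd_prod_of_subset _ _ _ hsub
    refine ⟨ε * c, ?_⟩
    have hcalc : P i * (ε * c)
        = (ε * ε) * ((∏ e ∈ (Finset.univ.erase i).image m, g e) * c) := by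
      rw [hPsplit, himg]; ring
    rw [hcalc, hεε, one_mul, ← hc]
  choose d hd using hPdvd
  set N : MvPolynomial (Fin (k+1)) K := ∑ i, t i * d i with hN
  have halgP : ∀ i, alg (P i) ≠ 0 := fun i h => hPne i (hinj (h.trans (map_zero alg).symm))
  have halgd : ∀ i, alg (d i) = alg Δ * (alg (P i))⁻¹ := by
    intro i
    rw [eq_mul_inv_iff_mul_eq₀ (halgP i), mul_comm, ← map_mul, ← hd i]
  have hfN : alg N = alg Δ * ∑ i, alg (t i) * (alg (P i))⁻¹ := by
    rw [hN, map_sum, Finset.mul_sum]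
    refine Finset.sum_congr rfl fun i _ => ?_
    rw [map_mul, halgd i]
    ring
  -- antisymmetry
  have hNanti : ∀ a b : Fin (k+1), a ≠ b → rename (Equiv.swap a b) N = -N := by
    intro a b hab
    set σ := Equiv.swap a b with hσ
    set τ : FractionRing (MvPolynomial (Fin (k+1)) K) ≃+*
        FractionRing (MvPolynomial (Fin (k+1)) K) :=
      IsFractionRing.ringEquivOfRingEquiv (renameEquiv K σ).toRingEquiv with hτdef
    have hτ : ∀ p : MvPolynomial (Fin (k+1)) K, τ (alg p) = alg (rename σ p) := fun p => by
      rw [hτdef]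
      exact IsFractionRing.ringEquivOfRingEquiv_algebraMap _ p
    have hPσ : ∀ i, rename σ (P i) = P (σ i) := by
      intro i
      rw [hP]
      simp only [map_prod, map_sub, rename_X]
      exact prod_erase_perm σ i (fun j' => X (σ i) - X j')
    have hτsum : τ (∑ i, alg (t i) * (alg (P i))⁻¹) = ∑ i, alg (t i) * (alg (P i))⁻¹ := by
      rw [map_sum]
      have hterm : ∀ i, τ (alg (t i) * (alg (P i))⁻¹)
          = alg (t (σ i)) * (alg (P (σ i)))⁻¹ := by
        intro i
        rw [map_mul, map_inv₀, hτ, hτ, ht a b hab i, hPσ i]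
      calc ∑ i, τ (alg (t i) * (alg (P i))⁻¹)
          = ∑ i, alg (t (σ i)) * (alg (P (σ i)))⁻¹ := Finset.sum_congr rfl fun i _ => hterm i
        _ = ∑ i, alg (t i) * (alg (P i))⁻¹ :=
            Fintype.sum_equiv σ _ _ (fun i => rfl)
    have hΔσ : rename σ Δ = -Δ := rename_swap_vandermonde hab
    have h1 : alg (rename σ N) = alg (-N) := by
      rw [← hτ, hfN, map_mul, hτ, hΔσ, hτsum, map_neg, map_neg, hfN]
      ring
    exact hinj h1
  -- each g e divides N
  have hgN : ∀ e ∈ Pset, g e ∣ N := by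
    intro e he
    obtain ⟨i, j⟩ := e
    have hij : i < j := by
      simpa [hPset, Finset.mem_sigma, Finset.mem_Ioi] using he
    have hne : i ≠ j := ne_of_lt hij
    set κ : MvPolynomial (Fin (k+1)) K →ₐ[K] MvPolynomial (Fin (k+1)) K :=
      aeval (fun tt => if tt = j then X i else X tt) with hκ
    have hκren : κ (rename (Equiv.swap i j) N) = κ N := by
      have hcomp : (κ.comp (rename (R := K) (Equiv.swap i j))) = κ := by
        apply MvPolynomial.algHom_ext
        intro s
        simp only [AlgHom.comp_apply, rename_X, hκ, aeval_X]
        rcases eq_or_ne s i with rfl | hsi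
        · rw [Equiv.swap_apply_left]
          simp [hne, Ne.symm hne]
        · rcases eq_or_ne s j with rfl | hsj
          · rw [Equiv.swap_apply_right]
            simp [hne, Ne.symm hne]
          · rw [Equiv.swap_apply_of_ne_of_ne hsi hsj]
      calc κ (rename (Equiv.swap i j) N)
          = (κ.comp (rename (R := K) (Equiv.swap i j))) N := rfl
        _ = κ N := by rw [hcomp]
    have hκN : κ N = 0 := by
      have h1 : κ N = - κ N := by
        conv_lhs => rw [← hκren, hNanti i j hne, map_neg]
      have h2 : (2 : MvPolynomial (Fin (k+1)) K) * κ N = 0 := by linear_combination h1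
      have h3 : (2 : MvPolynomial (Fin (k+1)) K) ≠ 0 := by
        intro h
        have h4 : (C (2 : K) : MvPolynomial (Fin (k+1)) K) = C (0 : K) := by
          rw [map_zero, ← h, map_ofNat]
        exact two_ne_zero (MvPolynomial.C_injective _ _ h4)
      rcases mul_eq_zero.mp h2 with h | h
      · exact absurd h h3
      · exact h
    have hdvd := sub_dvd_sub_subst (A := K) i j N
    rw [show aeval (fun tt => if tt = j then (X i : MvPolynomial (Fin (k+1)) K) else X tt) N
        = κ N from rfl, hκN, sub_zero] at hdvd
    exact hdvd
  -- primality
  have hprime : ∀ e ∈ Pset, Prime (g e) := by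
    rintro ⟨i, j⟩ he
    have hij : i < j := by
      simpa [hPset, Finset.mem_sigma, Finset.mem_Ioi] using he
    exact prime_X_sub_X (ne_of_gt hij)
  -- non-association
  have hnd : ∀ e ∈ Pset, ∀ f ∈ Pset, e ≠ f → ¬ g e ∣ g f := by
    rintro ⟨i, j⟩ he ⟨i', j'⟩ hf hef hdvd
    have hij : i < j := by simpa [hPset, Finset.mem_sigma, Finset.mem_Ioi] using he
    have hij' : i' < j' := by simpa [hPset, Finset.mem_sigma, Finset.mem_Ioi] using hf
    set κ : MvPolynomial (Fin (k+1)) K →ₐ[K] MvPolynomial (Fin (k+1)) K :=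
      aeval (fun tt => if tt = j then X i else X tt) with hκ
    have h0 : κ (g ⟨i, j⟩) = 0 := by
      simp [hκ, hg, aeval_X, ne_of_lt hij]
    have h1 : κ (g ⟨i', j'⟩)
        = X (if j' = j then i else j') - X (if i' = j then i else i') := by
      simp only [hκ, hg, map_sub, aeval_X]
      congr 1 <;> split <;> rfl
    have hne2 : (if j' = j then i else j') ≠ (if i' = j then i else i') := by
      by_cases h1' : j' = j
      · by_cases h2' : i' = j
        · exact absurd (h2'.trans h1'.symm) (ne_of_lt hij')
        · simp only [h1', h2', if_true, if_false]
          intro h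
          apply hef
          subst h1'
          subst h
          rfl
      · by_cases h2' : i' = j
        · simp only [h1', h2', if_true, if_false]
          exact ne_of_gt (lt_trans hij (h2' ▸ hij'))
        · simp only [h1', h2', if_false]
          exact ne_of_gt hij'
    obtain ⟨c, hc⟩ := hdvd
    have hzero : κ (g ⟨i', j'⟩) = 0 := by rw [hc, map_mul, h0, zero_mul]
    rw [h1] at hzero
    exact (sub_ne_zero_of_ne (fun hXX => hne2 (MvPolynomial.X_injective hXX))) hzero
  -- assemble
  have hΔdvd : Δ ∣ N := by
    rw [hΔprod]
    exact prod_primes_dvd' Pset g hprime hnd hgN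
  obtain ⟨p, hp⟩ := hΔdvd
  refine ⟨p, ?_⟩
  have hΔne : alg Δ ≠ 0 := by
    intro h
    have hΔ0 : Δ = 0 := hinj (h.trans (map_zero alg).symm)
    rw [hΔprod] at hΔ0
    obtain ⟨e, he, hge⟩ := Finset.prod_eq_zero_iff.mp hΔ0
    obtain ⟨i, j⟩ := e
    have hij : i < j := by simpa [hPset, Finset.mem_sigma, Finset.mem_Ioi] using he
    exact hXne (ne_of_gt hij) hge
  refine mul_left_cancel₀ hΔne ?_
  rw [← hfN, hp, map_mul]


noncomputable def Vs (K : Type*) [Field K] (k : ℕ) (i j : Fin (k+1)) :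
    PowerSeries (MvPolynomial (Fin (k+1)) K) :=
  PowerSeries.mk fun n => MvPolynomial.C ((-1)^n * (n.factorial : K)⁻¹) *
    ((∑ a ∈ Finset.range (n+1), X i ^ a * X j ^ (n-a))
      + X i * X j * ∑ a ∈ Finset.range n, X i ^ a * X j ^ (n-1-a))

theorem constCoeff_Vs (K : Type*) [Field K] (k : ℕ) (i j : Fin (k+1)) :
    PowerSeries.constantCoeff (Vs K k i j) = 1 := by
  rw [← PowerSeries.coeff_zero_eq_constantCoeff_apply]
  simp [Vs, PowerSeries.coeff_mk]

noncomputable def Ws (K : Type*) [Field K] (k : ℕ) (i j : Fin (k+1)) :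
    PowerSeries (MvPolynomial (Fin (k+1)) K) :=
  PowerSeries.invOfUnit (Vs K k i j) 1

theorem Vs_mul_Ws (K : Type*) [Field K] (k : ℕ) (i j : Fin (k+1)) :
    Vs K k i j * Ws K k i j = 1 :=
  PowerSeries.mul_invOfUnit _ _ (by rw [constCoeff_Vs]; rfl)

noncomputable def HRs (K : Type*) [Field K] (k : ℕ) (H : PowerSeries (Polynomial K))
    (i : Fin (k+1)) : PowerSeries (MvPolynomial (Fin (k+1)) K) :=
  PowerSeries.mk fun n => Polynomial.eval₂ MvPolynomial.C (X i) (PowerSeries.coeff n H)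

section Equivariance

variable {K : Type*} [Field K] {k : ℕ} (σ : Equiv.Perm (Fin (k+1)))

noncomputable def ren (K : Type*) [Field K] {k : ℕ} (σ : Equiv.Perm (Fin (k+1))) :
    MvPolynomial (Fin (k+1)) K →+* MvPolynomial (Fin (k+1)) K :=
  (rename (R := K) σ).toRingHom

theorem map_Vs (i j : Fin (k+1)) :
    PowerSeries.map (ren K σ) (Vs K k i j) = Vs K k (σ i) (σ j) := by
  ext n
  simp [Vs, PowerSeries.coeff_map, PowerSeries.coeff_mk, ren, map_sum, rename_C, rename_X]

theorem map_Ws (i j : Fin (k+1)) :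
    PowerSeries.map (ren K σ) (Ws K k i j) = Ws K k (σ i) (σ j) := by
  have h1 : Vs K k (σ i) (σ j) * PowerSeries.map (ren K σ) (Ws K k i j) = 1 := by
    rw [← map_Vs σ i j, ← map_mul, Vs_mul_Ws, map_one]
  have h2 := Vs_mul_Ws K k (σ i) (σ j)
  calc PowerSeries.map (ren K σ) (Ws K k i j)
      = (Vs K k (σ i) (σ j) * Ws K k (σ i) (σ j)) * PowerSeries.map (ren K σ) (Ws K k i j) := by
        rw [h2, one_mul]
    _ = Ws K k (σ i) (σ j) * (Vs K k (σ i) (σ j) * PowerSeries.map (ren K σ) (Ws K k i j)) := by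
        ring
    _ = Ws K k (σ i) (σ j) := by rw [h1, mul_one]

theorem map_HRs (H : PowerSeries (Polynomial K)) (i : Fin (k+1)) :
    PowerSeries.map (ren K σ) (HRs K k H i) = HRs K k H (σ i) := by
  apply PowerSeries.ext
  intro n
  rw [PowerSeries.coeff_map]
  simp only [HRs, PowerSeries.coeff_mk]
  rw [show (ren K σ) (Polynomial.eval₂ MvPolynomial.C (X i) ((PowerSeries.coeff n) H))
      = Polynomial.eval₂ ((ren K σ).comp MvPolynomial.C) (ren K σ (X i))
        ((PowerSeries.coeff n) H) from Polynomial.hom_eval₂ _ _ _ _]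
  congr 1
  · exact RingHom.ext fun a => rename_C σ a
  · exact rename_X σ i

end Equivariance

section Frac

variable {K : Type*} [Field K] [CharZero K] {k : ℕ}

theorem one_add_X_ne (i : Fin (k+1)) : (1 + X i : MvPolynomial (Fin (k+1)) K) ≠ 0 := by
  intro h
  have h2 := congrArg (MvPolynomial.constantCoeff) h
  simp only [map_add, map_one, constantCoeff_X, map_zero, add_zero] at h2
  exact one_ne_zero h2

theorem af_ne {p : MvPolynomial (Fin (k+1)) K} (hp : p ≠ 0) :
    algebraMap (MvPolynomial (Fin (k+1)) K) (FractionRing (MvPolynomial (Fin (k+1)) K)) p ≠ 0 :=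
  fun h => hp ((IsFractionRing.injective _ _) (h.trans (map_zero _).symm))

theorem X_sub_X_ne {i j : Fin (k+1)} (hij : i ≠ j) :
    (X i - X j : MvPolynomial (Fin (k+1)) K) ≠ 0 :=
  sub_ne_zero_of_ne fun hX => hij (MvPolynomial.X_injective hX)

local notation "FF" => FractionRing (MvPolynomial (Fin (k+1)) K)
local notation "af" => algebraMap (MvPolynomial (Fin (k+1)) K) (FractionRing (MvPolynomial (Fin (k+1)) K))

set_option maxHeartbeats 2000000 in
set_option synthInstance.maxHeartbeats 200000 in
theorem Adiff (i j : Fin (k+1)) (hij : i ≠ j) :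
    AofF (af (X i)) - AofF (af (X j))
      = PowerSeries.C (R := FF) (af (X i - X j) / af ((1 + X i) * (1 + X j)))
        * PowerSeries.map af (Vs K k i j) := by
  apply PowerSeries.ext
  intro n
  rw [LinearMap.map_sub (PowerSeries.coeff (R := FF) n)]
  have hA : ∀ x : FF, PowerSeries.coeff (R := FF) n (AofF x)
      = x / (1 + x) * ((n.factorial : FF)⁻¹ * (-x)^n) := by
    intro x
    rw [AofF, PowerSeries.coeff_C_mul, expF, PowerSeries.coeff_mk]
  rw [hA, hA, PowerSeries.coeff_C_mul, PowerSeries.coeff_map]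
  simp only [Vs, PowerSeries.coeff_mk]
  set si := af (X i) with hsi
  set sj := af (X j) with hsj
  have h1 : (1 : FF) + si ≠ 0 := by
    rw [hsi, ← map_one af, ← map_add]
    exact af_ne (one_add_X_ne i)
  have h2 : (1 : FF) + sj ≠ 0 := by
    rw [hsj, ← map_one af, ← map_add]
    exact af_ne (one_add_X_ne j)
  have hss : si - sj ≠ 0 := by
    rw [hsi, hsj, ← map_sub]
    exact af_ne (X_sub_X_ne hij)
  have hfct : ((n.factorial : FF)) ≠ 0 := Nat.cast_ne_zero.mpr n.factorial_ne_zero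
  have hC1 : af (MvPolynomial.C ((n.factorial : K)⁻¹)) = (n.factorial : FF)⁻¹ := by
    have h5 : ((af).comp MvPolynomial.C) ((n.factorial : K)⁻¹) = ((n.factorial : FF)⁻¹) := by
      rw [map_inv₀, map_natCast]
    exact h5
  simp only [map_mul, map_add, map_sum, map_pow, map_sub, map_one, map_neg, hC1, ← hsi, ← hsj]
  have hg1 := geom_sum₂_mul si sj (n+1)
  simp only [Nat.add_sub_cancel] at hg1
  have hg2 := geom_sum₂_mul si sj n
  have key : (si - sj) * ((∑ a ∈ Finset.range (n+1), si^a * sj^(n-a))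
        + si * sj * ∑ a ∈ Finset.range n, si^a * sj^(n-1-a))
      = si^(n+1) * (1+sj) - sj^(n+1) * (1+si) := by
    linear_combination hg1 + si * sj * hg2
  rw [neg_pow si, neg_pow sj]
  have hD : ((1:FF)+si)*(1+sj) ≠ 0 := mul_ne_zero h1 h2
  calc si/(1+si) * ((n.factorial : FF)⁻¹ * ((-1)^n * si^n))
        - sj/(1+sj) * ((n.factorial : FF)⁻¹ * ((-1)^n * sj^n))
      = (n.factorial : FF)⁻¹ * (-1)^n
          * ((si^(n+1) * (1+sj) - sj^(n+1) * (1+si)) / ((1+si)*(1+sj))) := by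
        field_simp
        ring
    _ = (n.factorial : FF)⁻¹ * (-1)^n
          * (((si - sj) * ((∑ a ∈ Finset.range (n+1), si^a * sj^(n-a))
              + si * sj * ∑ a ∈ Finset.range n, si^a * sj^(n-1-a))) / ((1+si)*(1+sj))) := by
        rw [key]
    _ = (si - sj) / ((1+si)*(1+sj)) * ((-1)^n * (n.factorial : FF)⁻¹
          * ((∑ a ∈ Finset.range (n+1), si^a * sj^(n-a))
              + si * sj * ∑ a ∈ Finset.range n, si^a * sj^(n-1-a))) := by
        field_simp
end Frac

section Frac
variable {K : Type*} [Field K] [CharZero K] {k : ℕ}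
local notation "FF" => FractionRing (MvPolynomial (Fin (k+1)) K)
local notation "af" => algebraMap (MvPolynomial (Fin (k+1)) K) (FractionRing (MvPolynomial (Fin (k+1)) K))

set_option maxHeartbeats 1000000 in
set_option synthInstance.maxHeartbeats 200000 in
theorem prodD_inv (i : Fin (k+1)) :
    (∏ j ∈ Finset.univ.erase i, (AofF (af (X i)) - AofF (af (X j))))⁻¹
      = PowerSeries.C (R := FF) (∏ j ∈ Finset.univ.erase i,
            (af (X i - X j) / af ((1 + X i) * (1 + X j))))⁻¹
        * PowerSeries.map af (∏ j ∈ Finset.univ.erase i, Ws K k i j) := by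
  set q := ∏ j ∈ Finset.univ.erase i, (af (X i - X j) / af ((1 + X i) * (1 + X j))) with hq
  have hqne : q ≠ 0 := by
    rw [hq]
    refine Finset.prod_ne_zero_iff.mpr fun j hj => ?_
    have hij : i ≠ j := fun h => (Finset.mem_erase.mp hj).1 h.symm
    exact div_ne_zero (af_ne (X_sub_X_ne hij))
      (af_ne (mul_ne_zero (one_add_X_ne i) (one_add_X_ne j)))
  have hS : ∏ j ∈ Finset.univ.erase i, (AofF (af (X i)) - AofF (af (X j)))
      = PowerSeries.C (R := FF) q * PowerSeries.map af (∏ j ∈ Finset.univ.erase i, Vs K k i j) := by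
    rw [hq, map_prod (PowerSeries.C (R := FF)), map_prod (PowerSeries.map af), ← Finset.prod_mul_distrib]
    refine Finset.prod_congr rfl fun j hj => ?_
    exact Adiff i j (fun h => (Finset.mem_erase.mp hj).1 h.symm)
  have hmul : (∏ j ∈ Finset.univ.erase i, (AofF (af (X i)) - AofF (af (X j))))
      * (PowerSeries.C (R := FF) q⁻¹ * PowerSeries.map af (∏ j ∈ Finset.univ.erase i, Ws K k i j))
      = 1 := by
    rw [hS]
    have h1 : (PowerSeries.C (R := FF) q * PowerSeries.map af (∏ j ∈ Finset.univ.erase i, Vs K k i j))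
        * (PowerSeries.C (R := FF) q⁻¹ * PowerSeries.map af (∏ j ∈ Finset.univ.erase i, Ws K k i j))
        = (PowerSeries.C (R := FF) q * PowerSeries.C (R := FF) q⁻¹)
          * PowerSeries.map af ((∏ j ∈ Finset.univ.erase i, Vs K k i j)
            * (∏ j ∈ Finset.univ.erase i, Ws K k i j)) := by
      rw [map_mul]
      ring
    rw [h1, ← map_mul, mul_inv_cancel₀ hqne, map_one, one_mul, ← Finset.prod_mul_distrib]
    have h2 : ∏ j ∈ Finset.univ.erase i, (Vs K k i j * Ws K k i j) = 1 := by
      rw [Finset.prod_congr rfl fun j _ => Vs_mul_Ws K k i j]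
      exact Finset.prod_const_one
    rw [h2, map_one]
  have hc0 : PowerSeries.constantCoeff (R := FF)
      (∏ j ∈ Finset.univ.erase i, (AofF (af (X i)) - AofF (af (X j)))) ≠ 0 := by
    have h3 := congrArg (PowerSeries.constantCoeff (R := FF)) hmul
    rw [map_mul, map_one] at h3
    exact left_ne_zero_of_mul_eq_one h3
  rw [PowerSeries.inv_eq_iff_mul_eq_one hc0]
  rw [mul_comm] at hmul
  exact hmul
end Frac

/-- the unfolded `Hat`. -/
noncomputable def HatD (K : Type*) [Field K] [CharZero K] (k : ℕ)
    (H : PowerSeries (Polynomial K)) (i : Fin (k+1)) :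
    PowerSeries (FractionRing (MvPolynomial (Fin (k+1)) K)) :=
  PowerSeries.mk fun n => Polynomial.eval₂
    ((algebraMap (MvPolynomial (Fin (k+1)) K) (FractionRing (MvPolynomial (Fin (k+1)) K))).comp
      MvPolynomial.C)
    (algebraMap (MvPolynomial (Fin (k+1)) K) (FractionRing (MvPolynomial (Fin (k+1)) K))
      (MvPolynomial.X i)) (PowerSeries.coeff n H)

/-- the unfolded `Hk`. -/
noncomputable def HkD (K : Type*) [Field K] [CharZero K] (k : ℕ)
    (H : PowerSeries (Polynomial K)) :
    PowerSeries (FractionRing (MvPolynomial (Fin (k+1)) K)) :=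
  ∑ i, HatD K k H i
    * (∏ j ∈ Finset.univ.erase i,
        (AofF (algebraMap (MvPolynomial (Fin (k+1)) K)
            (FractionRing (MvPolynomial (Fin (k+1)) K)) (MvPolynomial.X i))
          - AofF (algebraMap (MvPolynomial (Fin (k+1)) K)
            (FractionRing (MvPolynomial (Fin (k+1)) K)) (MvPolynomial.X j))))⁻¹

noncomputable def MiD (K : Type*) [Field K] (k : ℕ) (i : Fin (k+1)) :
    MvPolynomial (Fin (k+1)) K :=
  ∏ j ∈ Finset.univ.erase i, ((1 + X i) * (1 + X j))

noncomputable def uD (K : Type*) [Field K] (k : ℕ) (H : PowerSeries (Polynomial K))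
    (i : Fin (k+1)) (n : ℕ) : MvPolynomial (Fin (k+1)) K :=
  PowerSeries.coeff n (HRs K k H i * ∏ j ∈ Finset.univ.erase i, Ws K k i j)

section Frac2
variable {K : Type*} [Field K] [CharZero K] {k : ℕ}
local notation "FF" => FractionRing (MvPolynomial (Fin (k+1)) K)
local notation "af" => algebraMap (MvPolynomial (Fin (k+1)) K) (FractionRing (MvPolynomial (Fin (k+1)) K))

theorem HatD_eq (H : PowerSeries (Polynomial K)) (i : Fin (k+1)) :
    HatD K k H i = PowerSeries.map af (HRs K k H i) := by
  apply PowerSeries.ext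
  intro m
  rw [PowerSeries.coeff_map]
  simp only [HatD, HRs, PowerSeries.coeff_mk]
  exact (Polynomial.hom_eval₂ _ _ _ _).symm

set_option maxHeartbeats 1000000 in
set_option synthInstance.maxHeartbeats 400000 in
theorem coeff_HkD (H : PowerSeries (Polynomial K)) (n : ℕ) :
    PowerSeries.coeff (R := FF) n (HkD K k H)
      = ∑ i, af (MiD K k i * uD K k H i n)
          * (af (∏ j ∈ Finset.univ.erase i, (X i - X j)))⁻¹ := by
  rw [HkD, map_sum]
  refine Finset.sum_congr rfl fun i _ => ?_
  rw [prodD_inv i, HatD_eq]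
  have hPne : af (∏ j ∈ Finset.univ.erase i, (X i - X j)) ≠ 0 := by
    refine af_ne (Finset.prod_ne_zero_iff.mpr fun j hj => ?_)
    exact X_sub_X_ne (fun h => (Finset.mem_erase.mp hj).1 h.symm)
  have hMne : af (MiD K k i) ≠ 0 := by
    refine af_ne (Finset.prod_ne_zero_iff.mpr fun j _ => ?_)
    exact mul_ne_zero (one_add_X_ne i) (one_add_X_ne j)
  have hc : (∏ j ∈ Finset.univ.erase i, (af (X i - X j) / af ((1 + X i) * (1 + X j))))⁻¹
      = af (MiD K k i) * (af (∏ j ∈ Finset.univ.erase i, (X i - X j)))⁻¹ := by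
    rw [Finset.prod_div_distrib, ← map_prod, ← map_prod]
    rw [show (∏ j ∈ Finset.univ.erase i, ((1 + X i) * (1 + X j))) = MiD K k i from rfl]
    rw [inv_div, div_eq_mul_inv]
  rw [show PowerSeries.map af (HRs K k H i)
        * (PowerSeries.C (R := FF) (∏ j ∈ Finset.univ.erase i,
            (af (X i - X j) / af ((1 + X i) * (1 + X j))))⁻¹
          * PowerSeries.map af (∏ j ∈ Finset.univ.erase i, Ws K k i j))
      = PowerSeries.C (R := FF) (∏ j ∈ Finset.univ.erase i,
            (af (X i - X j) / af ((1 + X i) * (1 + X j))))⁻¹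
        * (PowerSeries.map af (HRs K k H i)
          * PowerSeries.map af (∏ j ∈ Finset.univ.erase i, Ws K k i j)) from by ring]
  rw [PowerSeries.coeff_C_mul, ← map_mul, PowerSeries.coeff_map]
  rw [show (PowerSeries.coeff (R := MvPolynomial (Fin (k+1)) K) n)
      (HRs K k H i * ∏ j ∈ Finset.univ.erase i, Ws K k i j) = uD K k H i n from rfl]
  rw [hc, map_mul]
  ring

theorem map_MiD (σ : Equiv.Perm (Fin (k+1))) (i : Fin (k+1)) :
    rename σ (MiD K k i) = MiD K k (σ i) := by
  rw [MiD, map_prod]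
  have hstep : ∀ j ∈ Finset.univ.erase i,
      rename σ ((1 + X i) * (1 + X j) : MvPolynomial (Fin (k+1)) K)
        = (1 + X (σ i)) * (1 + X (σ j)) := by
    intro j _
    rw [map_mul, map_add, map_add, map_one, rename_X, rename_X]
  rw [Finset.prod_congr rfl hstep]
  exact prod_erase_perm σ i (fun j' => (1 + X (σ i)) * (1 + X j'))

theorem map_uD (σ : Equiv.Perm (Fin (k+1))) (H : PowerSeries (Polynomial K))
    (i : Fin (k+1)) (n : ℕ) :
    rename σ (uD K k H i n) = uD K k H (σ i) n := by
  have h1 : rename σ (uD K k H i n)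
      = PowerSeries.coeff n (PowerSeries.map (ren K σ)
          (HRs K k H i * ∏ j ∈ Finset.univ.erase i, Ws K k i j)) :=
    (PowerSeries.coeff_map _ _ _).symm
  rw [h1, map_mul, map_HRs, map_prod]
  have hstep : ∀ j ∈ Finset.univ.erase i,
      PowerSeries.map (ren K σ) (Ws K k i j) = Ws K k (σ i) (σ j) := fun j _ => map_Ws σ i j
  rw [Finset.prod_congr rfl hstep]
  rw [prod_erase_perm σ i (fun j' => Ws K k (σ i) j')]
  rfl

theorem main1 (H : PowerSeries (Polynomial K)) (n : ℕ) :
    ∃ p : MvPolynomial (Fin (k+1)) K,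
      PowerSeries.coeff (R := FF) n (HkD K k H) = af p := by
  obtain ⟨p, hp⟩ := core (fun i => MiD K k i * uD K k H i n) (by
    intro a b hab i
    rw [map_mul, map_MiD, map_uD])
  exact ⟨p, by rw [coeff_HkD]; exact hp⟩

theorem main2 (H : PowerSeries (Polynomial K))
    (hH : ∀ n, Polynomial.eval (-1) (PowerSeries.coeff n H) = 0) (n : ℕ) :
    ∃ p : MvPolynomial (Fin (k+1)) K,
      PowerSeries.coeff (R := FF) n (HkD K k H)
        = af ((∏ i, (1 + MvPolynomial.X i)) * p) := by
  classical
  -- (1 + X i) divides uD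
  have hdvd : ∀ (i : Fin (k+1)) (m : ℕ), (1 + X i : MvPolynomial (Fin (k+1)) K) ∣ uD K k H i m := by
    intro i m
    rw [uD, PowerSeries.coeff_mul]
    refine Finset.dvd_sum fun p _ => dvd_mul_of_dvd_left ?_ _
    obtain ⟨q, hq⟩ := Polynomial.dvd_iff_isRoot.mpr (hH p.1)
    refine ⟨Polynomial.eval₂ MvPolynomial.C (X i) q, ?_⟩
    simp only [HRs, PowerSeries.coeff_mk]
    rw [hq, Polynomial.eval₂_mul, Polynomial.eval₂_sub, Polynomial.eval₂_X, Polynomial.eval₂_C,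
      map_neg, map_one]
    ring
  choose u' hu' using hdvd
  have hu'e : ∀ (σ : Equiv.Perm (Fin (k+1))) i, rename σ (u' i n) = u' (σ i) n := by
    intro σ i
    have h1 : (1 + X (σ i)) * rename σ (u' i n)
        = (1 + X (σ i) : MvPolynomial (Fin (k+1)) K) * u' (σ i) n := by
      rw [← hu' (σ i) n, ← map_uD σ H i n, hu' i n, map_mul, map_add, map_one, rename_X]
    exact mul_left_cancel₀ (one_add_X_ne (σ i)) h1
  set t' : Fin (k+1) → MvPolynomial (Fin (k+1)) K := fun i => (1 + X i)^k * u' i n with ht'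
  have hMt : ∀ i, MiD K k i * uD K k H i n = (∏ l, (1 + X l)) * t' i := by
    intro i
    have hMi : MiD K k i = (1 + X i)^k * ∏ j ∈ Finset.univ.erase i, (1 + X j) := by
      rw [MiD, Finset.prod_mul_distrib, Finset.prod_const, Finset.card_erase_of_mem
        (Finset.mem_univ i), Finset.card_univ, Fintype.card_fin, Nat.add_sub_cancel]
    rw [hMi, hu' i n, ht', ← Finset.mul_prod_erase Finset.univ _ (Finset.mem_univ i)]
    ring
  obtain ⟨p, hp⟩ := core t' (by
    intro a b hab i
    rw [ht', map_mul, map_pow, map_add, map_one, rename_X, hu'e])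
  refine ⟨p, ?_⟩
  rw [coeff_HkD]
  have h2 : ∀ i, af (MiD K k i * uD K k H i n)
      * (af (∏ j ∈ Finset.univ.erase i, (X i - X j)))⁻¹
      = af (∏ l, (1 + X l)) * (af (t' i)
        * (af (∏ j ∈ Finset.univ.erase i, (X i - X j)))⁻¹) := by
    intro i
    rw [hMt i, map_mul]
    ring
  rw [Finset.sum_congr rfl fun i _ => h2 i, ← Finset.mul_sum, hp, ← map_mul]
end Frac2
end Aux18

set_option maxHeartbeats 1000000 in
set_option synthInstance.maxHeartbeats 400000 in
theorem stmt_18 (K : Type*) [Field K] [CharZero K] (k : ℕ)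
    (H : PowerSeries (Polynomial K)) :
    let R := MvPolynomial (Fin (k + 1)) K
    let F := FractionRing R
    let ψ : K →+* F := (algebraMap R F).comp (MvPolynomial.C)
    let xe : Fin (k + 1) → F := fun i => algebraMap R F (MvPolynomial.X i)
    let Hat : Fin (k + 1) → PowerSeries F := fun i =>
      PowerSeries.mk fun n => Polynomial.eval₂ ψ (xe i) (PowerSeries.coeff n H)
    let Hk : PowerSeries F :=
      ∑ i, Hat i * (∏ j ∈ Finset.univ.erase i, (AofF (xe i) - AofF (xe j)))⁻¹
    (∀ n, ∃ p : R, PowerSeries.coeff n Hk = algebraMap R F p) ∧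
    ((∀ n, Polynomial.eval (-1) (PowerSeries.coeff n H) = 0) →
      ∀ n, ∃ p : R, PowerSeries.coeff n Hk
          = algebraMap R F ((∏ i, (1 + MvPolynomial.X i)) * p)) := by
  show (∀ n, ∃ p : MvPolynomial (Fin (k + 1)) K,
      PowerSeries.coeff n (Aux18.HkD K k H)
        = algebraMap (MvPolynomial (Fin (k + 1)) K)
            (FractionRing (MvPolynomial (Fin (k + 1)) K)) p) ∧
    ((∀ n, Polynomial.eval (-1) (PowerSeries.coeff n H) = 0) →
      ∀ n, ∃ p : MvPolynomial (Fin (k + 1)) K,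
        PowerSeries.coeff n (Aux18.HkD K k H)
          = algebraMap (MvPolynomial (Fin (k + 1)) K)
              (FractionRing (MvPolynomial (Fin (k + 1)) K))
              ((∏ i, (1 + MvPolynomial.X i)) * p))
  exact ⟨fun n => Aux18.main1 H n, fun hH n => Aux18.main2 H hH n⟩
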